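/- The function X is 4μ₀-Lipschitz with respect to single edge changes: if G and G' are two graphs on the same n-vertex set that differ in exactly one edge (one is obtained from the other by adding or deleting a single edge), then |X(G) − X(G')| ≤ 4μ₀. -/

import Mathlib

open MeasureTheory Filter
open scoped ENNReal NNReal

/-- Bernoulli measure on `Bool` with success probability `p` (clipped to `[0,1]`). -/
noncomputable def bern (p : ℝ) : Measure Bool :=
  (PMF.bernoulli (min (Real.toNNReal p) 1) (min_le_right _ _)).toMeasure

instance (p : ℝ) : IsProbabilityMeasure (bern p) :=
  PMF.toMeasure.isProbabilityMeasure _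

/-- The Erdős–Rényi measure: each potential edge (pair of vertices) is present
independently with probability `p`. -/
noncomputable def gnp (n : ℕ) (p : ℝ) : Measure (Sym2 (Fin n) → Bool) :=
  Measure.pi fun _ => bern p

/-- The simple graph determined by an outcome `ω`. -/
def graphOf (n : ℕ) (ω : Sym2 (Fin n) → Bool) : SimpleGraph (Fin n) where
  Adj u v := u ≠ v ∧ ω s(u, v) = true
  symm := ⟨fun u v ⟨h, e⟩ => ⟨h.symm, by rwa [Sym2.eq_swap]⟩⟩
  loopless := ⟨fun u ⟨h, _⟩ => h rfl⟩

/-- `I` is an independent set of `G`. -/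
def IsIndepFinset {n : ℕ} (G : SimpleGraph (Fin n)) (I : Finset (Fin n)) : Prop :=
  ∀ u ∈ I, ∀ v ∈ I, ¬ G.Adj u v

/-- `k₀ = max {k : C(n,k) (1-p)^{C(k,2)} ≥ n⁴}`. -/
noncomputable def kZero (n : ℕ) (p : ℝ) : ℕ :=
  sSup {k : ℕ | ((n : ℝ)) ^ 4 ≤ (n.choose k : ℝ) * (1 - p) ^ k.choose 2}

/-- `μ = C(n,k₀) (1-p)^{C(k₀,2)}`, the expected number of independent sets of size `k₀`. -/
noncomputable def muA (n : ℕ) (p : ℝ) : ℝ :=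
  (n.choose (kZero n p) : ℝ) * (1 - p) ^ ((kZero n p).choose 2)

/-- `μ₀ = C(n-2,k₀-2) (1-p)^{C(k₀,2)}`, the expected number of independent sets of size `k₀`
containing a fixed pair of vertices. -/
noncomputable def muB (n : ℕ) (p : ℝ) : ℝ :=
  ((n - 2).choose (kZero n p - 2) : ℝ) * (1 - p) ^ ((kZero n p).choose 2)

/-- `Xvar n k c G` is the size of the largest collection of independent sets of size `k` in `G`
such that no pair of (distinct) vertices belongs to more than `c` of these sets. -/
noncomputable def Xvar (n k : ℕ) (c : ℝ) (G : SimpleGraph (Fin n)) : ℕ :=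
  sSup {m : ℕ | ∃ F : Finset (Finset (Fin n)),
    (∀ I ∈ F, I.card = k ∧ IsIndepFinset G I) ∧
    (∀ u v : Fin n, u ≠ v →
      (({I ∈ (F : Set (Finset (Fin n))) | u ∈ I ∧ v ∈ I}).ncard : ℝ) ≤ c) ∧
    F.card = m}

/-- The number of independent sets of size `k` in `G`. -/
noncomputable def Nindep (n k : ℕ) (G : SimpleGraph (Fin n)) : ℕ :=
  {I : Finset (Fin n) | I.card = k ∧ IsIndepFinset G I}.ncard

/-- The number of independent sets of size `k` in `G` containing both endpoints of `e`. -/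
noncomputable def Zpair (n k : ℕ) (G : SimpleGraph (Fin n)) (e : Sym2 (Fin n)) : ℕ :=
  {I : Finset (Fin n) | I.card = k ∧ IsIndepFinset G I ∧ ∀ x ∈ e, x ∈ I}.ncard

open Classical in
/-- `Z⁺ = ∑_{u,v} Z⁺_{u,v}` where `Z⁺_{u,v} = Z_{u,v}` if `Z_{u,v} > c` and `0` otherwise. -/
noncomputable def Zplus (n k : ℕ) (c : ℝ) (G : SimpleGraph (Fin n)) : ℕ :=
  ∑ e ∈ Finset.univ.filter (fun e : Sym2 (Fin n) => ¬ e.IsDiag),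
    if c < (Zpair n k G e : ℝ) then Zpair n k G e else 0

lemma xvar_bdd (n k : ℕ) (c : ℝ) (G : SimpleGraph (Fin n)) :
    BddAbove {m : ℕ | ∃ F : Finset (Finset (Fin n)),
      (∀ I ∈ F, I.card = k ∧ IsIndepFinset G I) ∧
      (∀ u v : Fin n, u ≠ v →
        (({I ∈ (F : Set (Finset (Fin n))) | u ∈ I ∧ v ∈ I}).ncard : ℝ) ≤ c) ∧
      F.card = m} := by
  refine ⟨Fintype.card (Finset (Fin n)), fun m hm => ?_⟩
  obtain ⟨F, -, -, rfl⟩ := hm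
  exact F.card_le_univ

lemma xvar_zero_mem (n k : ℕ) (c : ℝ) (hc : 0 ≤ c) (G : SimpleGraph (Fin n)) :
    0 ∈ {m : ℕ | ∃ F : Finset (Finset (Fin n)),
      (∀ I ∈ F, I.card = k ∧ IsIndepFinset G I) ∧
      (∀ u v : Fin n, u ≠ v →
        (({I ∈ (F : Set (Finset (Fin n))) | u ∈ I ∧ v ∈ I}).ncard : ℝ) ≤ c) ∧
      F.card = m} := by
  refine ⟨∅, by simp, fun u v huv => ?_, by simp⟩
  simpa using hc

lemma xvar_one_side (n k₀ : ℕ) (μ₀ : ℝ) (hμ₀ : 0 < μ₀)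
    (G G' : SimpleGraph (Fin n)) (e : Sym2 (Fin n))
    (h : symmDiff G.edgeSet G'.edgeSet = {e}) :
    (Xvar n k₀ (4 * μ₀) G : ℝ) ≤ (Xvar n k₀ (4 * μ₀) G' : ℝ) + 4 * μ₀ := by
  classical
  have hc : (0:ℝ) ≤ 4 * μ₀ := by positivity
  -- e is not diagonal
  have he : e ∈ G.edgeSet ∪ G'.edgeSet := by
    have : e ∈ symmDiff G.edgeSet G'.edgeSet := h ▸ rfl
    rw [Set.symmDiff_def] at this
    rcases this with h1 | h1
    · exact Or.inl h1.1
    · exact Or.inr h1.1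
  have hdiag : ¬ e.IsDiag := by
    rcases he with h1 | h1
    · exact SimpleGraph.not_isDiag_of_mem_edgeSet _ h1
    · exact SimpleGraph.not_isDiag_of_mem_edgeSet _ h1
  induction e using Sym2.ind with
  | _ u v =>
  have huv : u ≠ v := by simpa using hdiag
  -- get witness family for G
  have hmem := Nat.sSup_mem ⟨0, xvar_zero_mem n k₀ (4*μ₀) hc G⟩ (xvar_bdd n k₀ (4*μ₀) G)
  obtain ⟨F, hF1, hF2, hFcard⟩ := hmem
  set F' := F.filter (fun I => ¬ (u ∈ I ∧ v ∈ I)) with hF'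
  -- F' is a valid family for G'
  have hF'1 : ∀ I ∈ F', I.card = k₀ ∧ IsIndepFinset G' I := by
    intro I hI
    rw [hF', Finset.mem_filter] at hI
    obtain ⟨hIF, hInuv⟩ := hI
    obtain ⟨hcard, hind⟩ := hF1 I hIF
    refine ⟨hcard, fun a ha b hb hadj => ?_⟩
    by_cases hG : G.Adj a b
    · exact hind a ha b hb hG
    · have : s(a, b) ∈ symmDiff G.edgeSet G'.edgeSet := by
        rw [Set.symmDiff_def]
        exact Or.inr ⟨hadj, hG⟩
      rw [h, Set.mem_singleton_iff, Sym2.eq_iff] at this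
      rcases this with ⟨rfl, rfl⟩ | ⟨rfl, rfl⟩
      · exact hInuv ⟨ha, hb⟩
      · exact hInuv ⟨hb, ha⟩
  have hF'2 : ∀ a b : Fin n, a ≠ b →
      (({I ∈ (F' : Set (Finset (Fin n))) | a ∈ I ∧ b ∈ I}).ncard : ℝ) ≤ 4 * μ₀ := by
    intro a b hab
    refine le_trans ?_ (hF2 a b hab)
    have hsub : {I ∈ (F' : Set (Finset (Fin n))) | a ∈ I ∧ b ∈ I} ⊆
        {I ∈ (F : Set (Finset (Fin n))) | a ∈ I ∧ b ∈ I} := by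
      intro I hI
      refine ⟨?_, hI.2⟩
      have := hI.1
      simp only [hF', Finset.coe_filter, Set.mem_setOf_eq] at this
      exact this.1
    exact_mod_cast Nat.cast_le.mpr (Set.ncard_le_ncard hsub (Set.toFinite _))
  have hF'mem : F'.card ∈ {m : ℕ | ∃ F : Finset (Finset (Fin n)),
      (∀ I ∈ F, I.card = k₀ ∧ IsIndepFinset G' I) ∧
      (∀ u v : Fin n, u ≠ v →
        (({I ∈ (F : Set (Finset (Fin n))) | u ∈ I ∧ v ∈ I}).ncard : ℝ) ≤ 4 * μ₀) ∧
      F.card = m} := ⟨F', hF'1, hF'2, rfl⟩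
  have hle : F'.card ≤ Xvar n k₀ (4*μ₀) G' := le_csSup (xvar_bdd n k₀ (4*μ₀) G') hF'mem
  -- count removed sets
  have hcount : ((F.filter (fun I => u ∈ I ∧ v ∈ I)).card : ℝ) ≤ 4 * μ₀ := by
    have := hF2 u v huv
    have heq : {I ∈ (F : Set (Finset (Fin n))) | u ∈ I ∧ v ∈ I}
        = ↑(F.filter (fun I => u ∈ I ∧ v ∈ I)) := by
      ext I; simp
    rw [heq, Set.ncard_coe_finset] at this
    exact this
  have hsplit : F'.card + (F.filter (fun I => u ∈ I ∧ v ∈ I)).card = F.card := by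
    rw [hF']
    have := Finset.card_filter_add_card_filter_not
      (s := F) (p := fun I => u ∈ I ∧ v ∈ I)
    omega
  have hX : Xvar n k₀ (4*μ₀) G = F.card := hFcard.symm
  calc (Xvar n k₀ (4*μ₀) G : ℝ) = F.card := by rw [hX]
    _ = (F'.card : ℝ) + (F.filter (fun I => u ∈ I ∧ v ∈ I)).card := by
        push_cast [← hsplit]; ring
    _ ≤ (Xvar n k₀ (4*μ₀) G' : ℝ) + 4 * μ₀ := by
        exact add_le_add (by exact_mod_cast hle) hcount

/-- `X` is `4μ₀`-Lipschitz with respect to single edge changes: if `G` and `G'` differ in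
exactly one edge, then `|X(G) − X(G')| ≤ 4μ₀`. -/
theorem X_lipschitz (n k₀ : ℕ) (μ₀ : ℝ) (hμ₀ : 0 < μ₀)
    (G G' : SimpleGraph (Fin n)) (e : Sym2 (Fin n))
    (h : symmDiff G.edgeSet G'.edgeSet = {e}) :
    |(Xvar n k₀ (4 * μ₀) G : ℝ) - (Xvar n k₀ (4 * μ₀) G' : ℝ)| ≤ 4 * μ₀ := by
  have h' : symmDiff G'.edgeSet G.edgeSet = {e} := by rwa [symmDiff_comm]
  have h1 := xvar_one_side n k₀ μ₀ hμ₀ G G' e h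
  have h2 := xvar_one_side n k₀ μ₀ hμ₀ G' G e h'
  rw [abs_sub_le_iff]
  constructor <;> linarith
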